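/- Let s : (0,b) → ℝ be a differentiable solution of the scalar Riccati inequality s' + s² + κ ≤ 0, and let s_κ : (0,b_κ) → ℝ be the maximally extended solution of s_κ' + s_κ² + κ = 0 with the same behavior near 0, i.e. lim_{t→0⁺}(s_κ(t) − s(t)) exists and is nonnegative. Then b ≤ b_κ and s(t) ≤ s_κ(t) for all t ∈ (0, b). -/

import Mathlib

open Real Set Filter

/-- The maximally extended solution of `s' + s² + κ = 0` blowing up at `0⁺`. -/
noncomputable def skappa (κ : ℝ) (t : ℝ) : ℝ :=
  if 0 < κ then Real.sqrt κ * Real.cos (Real.sqrt κ * t) / Real.sin (Real.sqrt κ * t)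
  else if κ = 0 then 1 / t
  else Real.sqrt (-κ) * Real.cosh (Real.sqrt (-κ) * t) / Real.sinh (Real.sqrt (-κ) * t)

/-- The right endpoint of the maximal interval of existence `(0, b_κ)` of `skappa κ`. -/
noncomputable def bkappa (κ : ℝ) : EReal :=
  if 0 < κ then ((π / Real.sqrt κ : ℝ) : EReal) else ⊤

lemma skappa_hasDerivAt (κ t : ℝ) (ht : 0 < t) (ht' : 0 < κ → t < π / Real.sqrt κ) :
    HasDerivAt (skappa κ) (-(skappa κ t)^2 - κ) t := by
  rcases lt_trichotomy 0 κ with hκ | hκ | hκ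
  · have ha : 0 < Real.sqrt κ := Real.sqrt_pos.2 hκ
    set a := Real.sqrt κ with ha'
    have hat : 0 < a * t := mul_pos ha ht
    have hatπ : a * t < π := by
      have := ht' hκ
      calc a * t < a * (π / a) := by exact mul_lt_mul_of_pos_left this ha
      _ = π := by field_simp
    have hsin : 0 < Real.sin (a * t) := Real.sin_pos_of_pos_of_lt_pi hat hatπ
    have h1 : HasDerivAt (fun u => a * Real.cos (a * u)) (a * (-Real.sin (a*t) * a)) t := by
      have := ((Real.hasDerivAt_cos (a*t)).comp t ((hasDerivAt_id t).const_mul a)).const_mul a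
      simpa [mul_comm, mul_assoc, mul_left_comm] using this
    have h2 : HasDerivAt (fun u => Real.sin (a * u)) (Real.cos (a*t) * a) t := by
      have := (Real.hasDerivAt_sin (a*t)).comp t ((hasDerivAt_id t).const_mul a)
      simpa [Function.comp_def] using this
    have h3 := h1.div h2 (ne_of_gt hsin)
    have hs : skappa κ = fun u => a * Real.cos (a * u) / Real.sin (a * u) := by
      funext u; simp [skappa, if_pos hκ, ha']
    rw [hs]
    convert (show HasDerivAt (fun u => a * Real.cos (a * u) / Real.sin (a * u)) _ t from h3) using 1
    have hsq : Real.sin (a*t)^2 + Real.cos (a*t)^2 = 1 := Real.sin_sq_add_cos_sq _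
    have haa : a ^ 2 = κ := Real.sq_sqrt hκ.le
    field_simp
    nlinarith [hsin]
  · subst hκ
    have hs : skappa 0 = fun u => 1 / u := by funext u; simp [skappa]
    rw [hs]
    have := hasDerivAt_inv (ne_of_gt ht)
    simpa [one_div, pow_two] using this.congr_deriv (by field_simp)
  · have hnκ : 0 < -κ := by linarith
    have ha : 0 < Real.sqrt (-κ) := Real.sqrt_pos.2 hnκ
    set a := Real.sqrt (-κ) with ha'
    have hat : 0 < a * t := mul_pos ha ht
    have hsinh : 0 < Real.sinh (a * t) := Real.sinh_pos_iff.2 hat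
    have h1 : HasDerivAt (fun u => a * Real.cosh (a * u)) (a * (Real.sinh (a*t) * a)) t := by
      have := ((Real.hasDerivAt_cosh (a*t)).comp t ((hasDerivAt_id t).const_mul a)).const_mul a
      simpa [mul_comm, mul_assoc, mul_left_comm] using this
    have h2 : HasDerivAt (fun u => Real.sinh (a * u)) (Real.cosh (a*t) * a) t := by
      have := (Real.hasDerivAt_sinh (a*t)).comp t ((hasDerivAt_id t).const_mul a)
      simpa [Function.comp_def] using this
    have h3 := h1.div h2 (ne_of_gt hsinh)
    have hs : skappa κ = fun u => a * Real.cosh (a * u) / Real.sinh (a * u) := by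
      funext u; simp [skappa, if_neg (by linarith : ¬ (0:ℝ) < κ), if_neg (by linarith : κ ≠ 0), ha']
    rw [hs]
    convert (show HasDerivAt (fun u => a * Real.cosh (a * u) / Real.sinh (a * u)) _ t from h3) using 1
    have hsq : Real.cosh (a*t)^2 - Real.sinh (a*t)^2 = 1 := Real.cosh_sq_sub_sinh_sq _
    have haa : a ^ 2 = -κ := Real.sq_sqrt hnκ.le
    field_simp
    nlinarith [hsinh]

lemma sinh_le_two_mul_cosh {x : ℝ} (hx : 0 ≤ x) : Real.sinh x ≤ 2 * x * Real.cosh x := by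
  rw [Real.sinh_eq, Real.cosh_eq]
  have h1 : 1 - 2*x ≤ Real.exp (-(2*x)) := by
    have := Real.add_one_le_exp (-(2*x)); linarith
  have h2 : Real.exp (-(2*x)) * Real.exp x = Real.exp (-x) := by
    rw [← Real.exp_add]; ring_nf
  have h3 := Real.exp_pos x
  have h4 := Real.exp_pos (-x)
  nlinarith [mul_le_mul_of_nonneg_right h1 h3.le]

/-- near 0, `skappa κ t ≥ 1/(2t)` -/
lemma skappa_lower (κ : ℝ) : ∀ᶠ t in nhdsWithin 0 (Set.Ioi 0), 1/(2*t) ≤ skappa κ t := by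
  rcases lt_trichotomy 0 κ with hκ | hκ | hκ
  · have ha : 0 < Real.sqrt κ := Real.sqrt_pos.2 hκ
    set a := Real.sqrt κ
    filter_upwards [Ioo_mem_nhdsGT (show (0:ℝ) < 1/a by positivity)] with t ht
    obtain ⟨ht0, ht1⟩ := ht
    have hat : 0 < a * t := mul_pos ha ht0
    have hat1 : a * t ≤ 1 := by
      have := (lt_div_iff₀ ha).1 ht1; linarith [mul_comm a t]
    have hsin0 : 0 < Real.sin (a*t) :=
      Real.sin_pos_of_pos_of_lt_pi hat (lt_of_le_of_lt hat1 (by linarith [Real.pi_gt_three]))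
    have hsin : Real.sin (a*t) ≤ a*t := Real.sin_le hat.le
    have hcos2 : (1:ℝ)/2 ≤ Real.cos (a*t) := by
      have := Real.one_sub_sq_div_two_le_cos (x := a*t)
      nlinarith
    rw [skappa, if_pos hκ]
    rw [div_le_div_iff₀ (by positivity) hsin0]
    show (1:ℝ) * Real.sin (a*t) ≤ a * Real.cos (a*t) * (2*t)
    nlinarith [mul_le_mul_of_nonneg_left hcos2 (mul_pos ha (mul_pos two_pos ht0)).le]
  · subst hκ
    filter_upwards [self_mem_nhdsWithin] with t (ht : 0 < t)
    rw [skappa, if_neg (lt_irrefl 0), if_pos rfl]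
    rw [div_le_div_iff₀ (by positivity) ht]
    nlinarith
  · have hnκ : 0 < -κ := by linarith
    have ha : 0 < Real.sqrt (-κ) := Real.sqrt_pos.2 hnκ
    set a := Real.sqrt (-κ)
    filter_upwards [self_mem_nhdsWithin] with t (ht : 0 < t)
    have hat : 0 < a * t := mul_pos ha ht
    have hsinh : 0 < Real.sinh (a*t) := Real.sinh_pos_iff.2 hat
    have hcosh : 0 < Real.cosh (a*t) := Real.cosh_pos _
    have hkey := sinh_le_two_mul_cosh hat.le
    rw [skappa, if_neg (by linarith : ¬ (0:ℝ) < κ), if_neg (by linarith : κ ≠ 0)]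
    rw [div_le_div_iff₀ (by positivity) hsinh]
    nlinarith

lemma skappa_tendsto_atBot {κ : ℝ} (hκ : 0 < κ) :
    Tendsto (skappa κ) (nhdsWithin (π / Real.sqrt κ) (Set.Iio (π / Real.sqrt κ))) atBot := by
  have ha : 0 < Real.sqrt κ := Real.sqrt_pos.2 hκ
  set a := Real.sqrt κ with ha'
  set c := π / a with hc'
  have hc : 0 < c := by positivity
  have hac : a * c = π := by rw [hc']; field_simp
  have h1 : Tendsto (fun t => a * Real.cos (a*t)) (nhdsWithin c (Set.Iio c)) (nhds (-a)) := by
    have hcont : Continuous fun t => a * Real.cos (a*t) := by continuity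
    have := (hcont.tendsto c).mono_left (nhdsWithin_le_nhds (s := Set.Iio c))
    simpa [hac, Real.cos_pi] using this
  have h2 : Tendsto (fun t => Real.sin (a*t)) (nhdsWithin c (Set.Iio c)) (nhdsWithin 0 (Set.Ioi 0)) := by
    rw [tendsto_nhdsWithin_iff]
    constructor
    · have hcont : Continuous fun t => Real.sin (a*t) := by continuity
      have := (hcont.tendsto c).mono_left (nhdsWithin_le_nhds (s := Set.Iio c))
      simpa [hac, Real.sin_pi] using this
    · filter_upwards [Ioo_mem_nhdsLT hc] with t ht
      exact Real.sin_pos_of_pos_of_lt_pi (mul_pos ha ht.1)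
        (by rw [← hac]; exact mul_lt_mul_of_pos_left ht.2 ha)
  have h3 : Tendsto (fun t => (Real.sin (a*t))⁻¹) (nhdsWithin c (Set.Iio c)) atTop :=
    tendsto_inv_nhdsGT_zero.comp h2
  have h4 := Filter.Tendsto.neg_mul_atTop (by linarith : -a < 0) h1 h3
  apply h4.congr'
  filter_upwards [Ioo_mem_nhdsLT hc] with t ht
  rw [skappa, if_pos hκ, div_eq_mul_inv]

set_option maxHeartbeats 1000000 in
lemma riccati_comp (κ c b : ℝ) (hc : 0 < c) (hcb : c ≤ b)
    (hcκ : 0 < κ → c ≤ π / Real.sqrt κ)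
    (s : ℝ → ℝ)
    (hdiff : ∀ t ∈ Set.Ioo 0 b, DifferentiableAt ℝ s t)
    (hineq : ∀ t ∈ Set.Ioo 0 b, deriv s t + (s t) ^ 2 + κ ≤ 0)
    (L : ℝ) (hL : 0 ≤ L)
    (hlim : Tendsto (fun t => skappa κ t - s t) (nhdsWithin 0 (Set.Ioi 0)) (nhds L)) :
    ∀ t ∈ Set.Ioo 0 c, s t ≤ skappa κ t := by
  have hsub : Set.Ioo 0 c ⊆ Set.Ioo 0 b := Set.Ioo_subset_Ioo le_rfl hcb
  have hkd : ∀ t ∈ Set.Ioo 0 c, HasDerivAt (skappa κ) (-(skappa κ t)^2 - κ) t := by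
    intro t ht
    exact skappa_hasDerivAt κ t ht.1 (fun hκ => lt_of_lt_of_le ht.2 (hcκ hκ))
  have hsc : ContinuousOn s (Set.Ioo 0 c) :=
    fun t ht => ((hdiff t (hsub ht)).continuousAt).continuousWithinAt
  set g : ℝ → ℝ := fun t => s t + skappa κ t with hg'
  have hgc : ContinuousOn g (Set.Ioo 0 c) := by
    apply hsc.add
    exact fun t ht => (hkd t ht).continuousAt.continuousWithinAt
  set t0 : ℝ := c/2 with ht0'
  have ht0 : t0 ∈ Set.Ioo 0 c := ⟨by positivity, by linarith⟩
  have hgint : ∀ x ∈ Set.Ioo 0 c, ∀ y ∈ Set.Ioo 0 c,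
      IntervalIntegrable g MeasureTheory.volume x y := by
    intro x hx y hy
    apply ContinuousOn.intervalIntegrable
    exact hgc.mono ((Set.ordConnected_Ioo).uIcc_subset hx hy)
  set G : ℝ → ℝ := fun t => ∫ u in t0..t, g u with hG'
  have hGd : ∀ t ∈ Set.Ioo 0 c, HasDerivAt G (g t) t := by
    intro t ht
    exact intervalIntegral.integral_hasDerivAt_right (hgint t0 ht0 t ht)
      (hgc.stronglyMeasurableAtFilter isOpen_Ioo t ht)
      (hgc.continuousAt (isOpen_Ioo.mem_nhds ht))
  set f : ℝ → ℝ := fun t => skappa κ t - s t with hf'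
  set h : ℝ → ℝ := fun t => f t * Real.exp (G t) with hh'
  have hhd : ∀ t ∈ Set.Ioo 0 c,
      HasDerivAt h ((-(deriv s t + (s t)^2 + κ)) * Real.exp (G t)) t := by
    intro t ht
    have hfd : HasDerivAt f ((-(skappa κ t)^2 - κ) - deriv s t) t :=
      (hkd t ht).sub (hdiff t (hsub ht)).hasDerivAt
    have hed : HasDerivAt (fun u => Real.exp (G u)) (Real.exp (G t) * g t) t :=
      (hGd t ht).exp
    have := hfd.mul hed
    convert (show HasDerivAt (fun u => f u * Real.exp (G u)) _ t from this) using 1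
    simp only [hf', hg']
    ring
  have hmono : MonotoneOn h (Set.Ioo 0 c) := by
    apply monotoneOn_of_deriv_nonneg (convex_Ioo 0 c)
    · exact fun t ht => (hhd t ht).continuousAt.continuousWithinAt
    · rw [interior_Ioo]
      exact fun t ht => (hhd t ht).differentiableAt.differentiableWithinAt
    · rw [interior_Ioo]
      intro t ht
      rw [(hhd t ht).deriv]
      have := hineq t (hsub ht)
      have := Real.exp_pos (G t)
      nlinarith
  -- G tends to -∞ at 0⁺
  have hGbot : Tendsto G (nhdsWithin 0 (Set.Ioi 0)) atBot := by
    have hev : ∀ᶠ u in nhdsWithin 0 (Set.Ioi 0),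
        (1/(2*u) ≤ skappa κ u ∧ skappa κ u - s u < L + 1) :=
      (skappa_lower κ).and (hlim.eventually_lt_const (by linarith))
    obtain ⟨ε, hε, hIoo⟩ := mem_nhdsGT_iff_exists_Ioo_subset.1 hev
    set t1 : ℝ := min (c/2) (ε/2) with ht1'
    have hε0 : 0 < ε := hε
    have ht1pos : 0 < t1 := lt_min (by positivity) (by linarith)
    have ht1c : t1 ∈ Set.Ioo 0 c := ⟨ht1pos, lt_of_le_of_lt (min_le_left _ _) (by linarith)⟩
    have ht1ε : t1 < ε := lt_of_le_of_lt (min_le_right _ _) (by linarith)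
    have key : ∀ t ∈ Set.Ioo 0 t1, G t ≤ (G t1 - Real.log t1 + (L+1)*t1) + Real.log t := by
      intro t ht
      have htc : t ∈ Set.Ioo 0 c := ⟨ht.1, lt_trans ht.2 ht1c.2⟩
      have hGsplit : G t = G t1 + ∫ u in t1..t, g u :=
        (intervalIntegral.integral_add_adjacent_intervals (hgint t0 ht0 t1 ht1c)
          (hgint t1 ht1c t htc)).symm
      have hlow : ∀ u ∈ Set.Icc t t1, (1/u - (L+1)) ≤ g u := by
        intro u hu
        have hu0 : 0 < u := lt_of_lt_of_le ht.1 hu.1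
        have huε : u < ε := lt_of_le_of_lt hu.2 ht1ε
        have := hIoo ⟨hu0, huε⟩
        simp only [hg', hf']
        have h1 : 1/(2*u) ≤ skappa κ u := this.1
        have h2 : skappa κ u - s u < L + 1 := this.2
        have : 1/u = 2 * (1/(2*u)) := by field_simp
        rw [this]; linarith
      have hint1 : IntervalIntegrable (fun u => 1/u - (L+1)) MeasureTheory.volume t t1 := by
        apply ContinuousOn.intervalIntegrable
        apply ContinuousOn.sub _ continuousOn_const
        apply ContinuousOn.div continuousOn_const continuousOn_id
        intro x hx
        have : (0:ℝ) < x := by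
          rcases Set.mem_uIcc.1 hx with h | h
          · exact lt_of_lt_of_le ht.1 h.1
          · exact lt_of_lt_of_le ht1pos h.1
        exact ne_of_gt this
      have hmono2 : (∫ u in t..t1, (1/u - (L+1))) ≤ ∫ u in t..t1, g u := by
        apply intervalIntegral.integral_mono_on ht.2.le hint1
          (hgint t htc t1 ht1c) hlow
      have hcomp : (∫ u in t..t1, (1/u - (L+1)))
          = (Real.log t1 - Real.log t) - (L+1)*(t1 - t) := by
        have hdiv : IntervalIntegrable (fun u : ℝ => 1/u) MeasureTheory.volume t t1 := by
          simpa using hint1.add (intervalIntegrable_const (c := L+1))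
        rw [intervalIntegral.integral_sub hdiv intervalIntegrable_const,
          integral_one_div_of_pos ht.1 ht1pos, intervalIntegral.integral_const,
          Real.log_div (ne_of_gt ht1pos) (ne_of_gt ht.1)]
        simp only [smul_eq_mul]
        ring
      have hsymm : (∫ u in t1..t, g u) = - ∫ u in t..t1, g u :=
        (intervalIntegral.integral_symm t t1)
      have ht01 : 0 < t := ht.1
      rw [hGsplit, hsymm]
      have := hmono2
      rw [hcomp] at this
      nlinarith [mul_nonneg (by linarith : (0:ℝ) ≤ L + 1) ht01.le]
    have hlogbot : Tendsto (fun x => (G t1 - Real.log t1 + (L+1)*t1) + Real.log x)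
        (nhdsWithin 0 (Set.Ioi 0)) atBot :=
      tendsto_atBot_add_const_left _ _ Real.tendsto_log_nhdsGT_zero
    refine tendsto_atBot_mono' _ ?_ hlogbot
    filter_upwards [Ioo_mem_nhdsGT ht1pos] with t ht
    exact key t ht
  have hexp : Tendsto (fun t => Real.exp (G t)) (nhdsWithin 0 (Set.Ioi 0)) (nhds 0) :=
    Real.tendsto_exp_atBot.comp hGbot
  have hh0 : Tendsto h (nhdsWithin 0 (Set.Ioi 0)) (nhds 0) := by
    have := hlim.mul hexp
    simpa using this
  intro t ht
  have h0le : 0 ≤ h t := by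
    apply le_of_tendsto hh0
    filter_upwards [Ioo_mem_nhdsGT ht.1] with u hu
    exact hmono ⟨hu.1, lt_trans hu.2 ht.2⟩ ht hu.2.le
  have hfle : 0 ≤ f t := (mul_nonneg_iff_of_pos_right (Real.exp_pos (G t))).1 h0le
  simpa [hf', sub_nonneg] using hfle


theorem riccati_scalar_comparison
    (κ b : ℝ) (hb : 0 < b) (s : ℝ → ℝ)
    (hdiff : ∀ t ∈ Set.Ioo 0 b, DifferentiableAt ℝ s t)
    (hineq : ∀ t ∈ Set.Ioo 0 b, deriv s t + (s t) ^ 2 + κ ≤ 0)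
    (L : ℝ) (hL : 0 ≤ L)
    (hlim : Filter.Tendsto (fun t => skappa κ t - s t) (nhdsWithin 0 (Set.Ioi 0)) (nhds L)) :
    (b : EReal) ≤ bkappa κ ∧ ∀ t ∈ Set.Ioo 0 b, s t ≤ skappa κ t := by
  by_cases hκ : 0 < κ
  · have hsq : 0 < Real.sqrt κ := Real.sqrt_pos.2 hκ
    set c : ℝ := π / Real.sqrt κ with hc'
    have hc : 0 < c := by positivity
    have hbc : b ≤ c := by
      by_contra hlt
      push_neg at hlt
      have hcomp := riccati_comp κ c b hc hlt.le (fun _ => le_rfl) s hdiff hineq L hL hlim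
      have hcIoo : c ∈ Set.Ioo 0 b := ⟨hc, hlt⟩
      have hscont : Tendsto s (nhdsWithin c (Set.Iio c)) (nhds (s c)) :=
        ((hdiff c hcIoo).continuousAt.tendsto).mono_left
          (nhdsWithin_le_nhds (s := Set.Iio c))
      have hsbot : Tendsto s (nhdsWithin c (Set.Iio c)) atBot := by
        refine tendsto_atBot_mono' _ ?_ (skappa_tendsto_atBot hκ)
        filter_upwards [Ioo_mem_nhdsLT hc] with t ht
        exact hcomp t ht
      exact not_tendsto_nhds_of_tendsto_atBot hsbot (s c) hscont
    constructor
    · rw [bkappa, if_pos hκ]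
      exact_mod_cast hbc
    · exact riccati_comp κ b b hb le_rfl (fun _ => hbc) s hdiff hineq L hL hlim
  · refine ⟨by rw [bkappa, if_neg hκ]; exact le_top, ?_⟩
    exact riccati_comp κ b b hb le_rfl (fun h => absurd h hκ) s hdiff hineq L hL hlim
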